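/- For real α > -1, y > 0, and natural numbers m ≠ n, the functions f_0(ρ) = 1 and f_n(ρ) = L_n^{(α)}(ρ) - (I_{n,0}/I_{n-1,0}) L_{n-1}^{(α)}(ρ) for n ≥ 1 are orthogonal with respect to the weight w(ρ) = (1+yρ)^{-1} ρ^α e^{-ρ} on (0,∞): ∫_0^∞ w(ρ) f_m(ρ) f_n(ρ) dρ = 0 for m ≠ n. -/

import Mathlib

open MeasureTheory Real Set Polynomial

/-- Generalized Laguerre polynomial `L_n^{(α)}(x)`. -/
noncomputable def genLaguerre (α : ℝ) (n : ℕ) (x : ℝ) : ℝ :=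
  ∑ j ∈ Finset.range (n + 1),
    (-1 : ℝ) ^ j * (Real.Gamma (α + n + 1) /
      (Real.Gamma (α + j + 1) * (Nat.factorial (n - j)))) * x ^ j / (Nat.factorial j)

/-- The function `I_{m,n}^{(α,β)}(y)`. -/
noncomputable def Imn (α β y : ℝ) (m n : ℕ) : ℝ :=
  ∫ ρ in Ioi (0 : ℝ), (1 + y * ρ)⁻¹ * ρ ^ α * Real.exp (-ρ) *
    genLaguerre α m ρ * genLaguerre β n ρ


/-- The orthogonal polynomials for the weight (1+yρ)⁻¹ ρ^α e^(-ρ). -/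
noncomputable def fpoly (α y : ℝ) (n : ℕ) (ρ : ℝ) : ℝ :=
  if n = 0 then 1
  else genLaguerre α n ρ -
    (Imn α α y n 0 / Imn α α y (n - 1) 0) * genLaguerre α (n - 1) ρ


lemma degQ_lt (m : ℕ) (P : ℝ[X]) (hP : P.degree < ((m : ℕ) + 1 : ℕ)) :
    (P - P.comp (X + C 1)).degree < (m : ℕ) := by
  by_cases h0 : P.natDegree = 0
  · obtain ⟨a, rfl⟩ := Polynomial.natDegree_eq_zero.mp h0
    simp only [C_comp, sub_self, degree_zero]
    exact bot_lt_iff_ne_bot.mpr (by simp)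
  · have hq : (X + C (1:ℝ)).natDegree = 1 := by
      exact Polynomial.natDegree_X_add_C 1
    have hPne : P ≠ 0 := fun h => h0 (by simp [h])
    have hdeg : (P.comp (X + C 1)).degree = P.degree := by
      have h1 : (P.comp (X + C 1)).natDegree = P.natDegree := by
        rw [Polynomial.natDegree_comp, hq, mul_one]
      have hcne : P.comp (X + C 1) ≠ 0 := by
        intro h
        have := h1
        rw [h, natDegree_zero] at this
        exact h0 this.symm
      rw [Polynomial.degree_eq_natDegree hPne, Polynomial.degree_eq_natDegree hcne, h1]
    have hlc : P.leadingCoeff = (P.comp (X + C 1)).leadingCoeff := by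
      rw [Polynomial.leadingCoeff_comp (by rw [hq]; exact one_ne_zero)]
      rw [(Polynomial.monic_X_add_C (1:ℝ)).leadingCoeff]; ring
    have := Polynomial.degree_sub_lt hdeg.symm hPne hlc
    calc (P - P.comp (X + C 1)).degree < P.degree := this
      _ ≤ (m : ℕ) := by
        rw [Polynomial.degree_eq_natDegree hPne] at hP ⊢
        exact_mod_cast Nat.lt_succ_iff.mp (by exact_mod_cast hP)

lemma altsum (m : ℕ) (P : ℝ[X]) (hP : P.degree < (m : ℕ)) :
    ∑ k ∈ Finset.range (m + 1), (-1 : ℝ) ^ k * (m.choose k) * P.eval (k : ℝ) = 0 := by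
  induction m generalizing P with
  | zero =>
    have : P = 0 := by
      rw [← Polynomial.degree_eq_bot]
      exact Nat.WithBot.lt_zero_iff.mp (by exact_mod_cast hP)
    simp [this]
  | succ m ih =>
    set Q := P - P.comp (X + C 1) with hQ
    have hevQ : ∀ x : ℝ, Q.eval x = P.eval x - P.eval (x + 1) := by
      intro x; simp [hQ]
    have key : ∑ k ∈ Finset.range (m + 2), (-1 : ℝ) ^ k * ((m+1).choose k) * P.eval (k : ℝ)
        = ∑ k ∈ Finset.range (m + 1), (-1 : ℝ) ^ k * (m.choose k) * Q.eval (k : ℝ) := by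
      have e1 : ∑ k ∈ Finset.range (m + 1), (-1 : ℝ) ^ k * (m.choose k) * Q.eval (k : ℝ)
          = (∑ k ∈ Finset.range (m + 1), (-1 : ℝ) ^ k * (m.choose k) * P.eval (k : ℝ))
            - ∑ k ∈ Finset.range (m + 1), (-1 : ℝ) ^ k * (m.choose k) * P.eval ((k : ℝ) + 1) := by
        rw [← Finset.sum_sub_distrib]
        congr 1; ext k; rw [hevQ]; ring
      have e2 : ∑ k ∈ Finset.range (m + 1), (-1 : ℝ) ^ k * (m.choose k) * P.eval (k : ℝ)
          = P.eval 0 + ∑ k ∈ Finset.range m, (-1 : ℝ) ^ (k+1) * (m.choose (k+1)) * P.eval ((k:ℝ) + 1) := by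
        rw [Finset.sum_range_succ']
        simp [add_comm]
      have e3 : ∑ k ∈ Finset.range (m + 2), (-1:ℝ)^k * (((m+1).choose k : ℕ) : ℝ) * P.eval (k : ℝ)
          = P.eval 0 + ∑ k ∈ Finset.range (m+1),
              (-1:ℝ)^(k+1) * ((m.choose k : ℝ) + (m.choose (k+1):ℝ)) * P.eval ((k:ℝ)+1) := by
        rw [Finset.sum_range_succ']
        push_cast [Nat.choose_succ_succ]
        simp [add_comm]
      have e4 : ∑ k ∈ Finset.range (m+1),
            (-1:ℝ)^(k+1) * ((m.choose k : ℝ) + (m.choose (k+1):ℝ)) * P.eval ((k:ℝ)+1)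
          = -(∑ k ∈ Finset.range (m+1), (-1:ℝ)^k * (m.choose k : ℝ) * P.eval ((k:ℝ)+1))
            + ∑ k ∈ Finset.range (m+1), (-1:ℝ)^(k+1) * (m.choose (k+1) : ℝ) * P.eval ((k:ℝ)+1) := by
        rw [← Finset.sum_neg_distrib, ← Finset.sum_add_distrib]
        congr 1; ext k; ring
      have e5 : ∑ k ∈ Finset.range (m+1), (-1:ℝ)^(k+1) * (m.choose (k+1) : ℝ) * P.eval ((k:ℝ)+1)
          = ∑ k ∈ Finset.range m, (-1:ℝ)^(k+1) * (m.choose (k+1) : ℝ) * P.eval ((k:ℝ)+1) := by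
        rw [Finset.sum_range_succ]
        simp [Nat.choose_succ_self]
      rw [e3, e4, e5, e1]
      linarith [e2]
    rw [key]
    exact ih Q (degQ_lt m P hP)


lemma int_mono {α : ℝ} (hα : -1 < α) (j : ℕ) :
    IntegrableOn (fun ρ : ℝ => ρ ^ α * Real.exp (-ρ) * ρ ^ j) (Ioi 0) := by
  have hs : (0:ℝ) < α + j + 1 := by
    have : (0:ℕ) ≤ j := Nat.zero_le j
    have hj : (0:ℝ) ≤ (j:ℝ) := Nat.cast_nonneg j
    linarith
  have := Real.GammaIntegral_convergent hs
  refine this.congr_fun (fun x hx => ?_) measurableSet_Ioi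
  have hx0 : (0:ℝ) < x := hx
  beta_reduce
  rw [show α + (j:ℝ) + 1 - 1 = α + j by ring, Real.rpow_add hx0, Real.rpow_natCast]
  ring

lemma moment {α : ℝ} (hα : -1 < α) (j : ℕ) :
    ∫ ρ in Ioi (0:ℝ), ρ ^ α * Real.exp (-ρ) * ρ ^ j = Real.Gamma (α + j + 1) := by
  have hs : (0:ℝ) < α + j + 1 := by
    have hj : (0:ℝ) ≤ (j:ℝ) := Nat.cast_nonneg j
    linarith
  rw [Real.Gamma_eq_integral hs]
  refine setIntegral_congr_fun measurableSet_Ioi (fun x hx => ?_)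
  have hx0 : (0:ℝ) < x := hx
  rw [show α + (j:ℝ) + 1 - 1 = α + j by ring, Real.rpow_add hx0, Real.rpow_natCast]
  ring

-- integrability of x^α e^{-x} * p(x)
lemma int_poly {α : ℝ} (hα : -1 < α) (p : ℝ[X]) :
    IntegrableOn (fun ρ : ℝ => ρ ^ α * Real.exp (-ρ) * p.eval ρ) (Ioi 0) := by
  have : ∀ ρ : ℝ, ρ ^ α * Real.exp (-ρ) * p.eval ρ
      = ∑ j ∈ Finset.range (p.natDegree + 1), p.coeff j * (ρ ^ α * Real.exp (-ρ) * ρ ^ j) := by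
    intro ρ
    rw [Polynomial.eval_eq_sum_range, Finset.mul_sum]
    congr 1; ext j; ring
  simp only [this]
  exact integrable_finset_sum _ (fun j _ => ((int_mono hα j).const_mul _))

lemma int_w_poly {α : ℝ} (hα : -1 < α) {y : ℝ} (hy : 0 < y) (p : ℝ[X]) :
    IntegrableOn (fun ρ : ℝ => (1 + y * ρ)⁻¹ * ρ ^ α * Real.exp (-ρ) * p.eval ρ) (Ioi 0) := by
  have hmeas : AEStronglyMeasurable
      (fun ρ : ℝ => (1 + y * ρ)⁻¹ * ρ ^ α * Real.exp (-ρ) * p.eval ρ)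
      (volume.restrict (Ioi 0)) := by
    apply ContinuousOn.aestronglyMeasurable ?_ measurableSet_Ioi
    apply ContinuousOn.mul ?_ p.continuous_aeval.continuousOn
    apply ContinuousOn.mul ?_ (Real.continuous_exp.comp continuous_neg).continuousOn
    apply ContinuousOn.mul
    · apply ContinuousOn.inv₀ (by fun_prop)
      intro x hx
      have hx0 : (0:ℝ) < x := hx
      positivity
    · intro x hx
      exact (Real.continuousAt_rpow_const x _ (Or.inl (ne_of_gt hx))).continuousWithinAt
  refine Integrable.mono (int_poly hα p) hmeas ?_
  filter_upwards [ae_restrict_mem measurableSet_Ioi] with x hx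
  have hx0 : (0:ℝ) < x := hx
  have h1 : (0:ℝ) < 1 + y * x := by positivity
  have h2 : (1 + y * x)⁻¹ ≤ 1 := by
    rw [inv_le_one_iff₀]; right; nlinarith
  rw [Real.norm_eq_abs, Real.norm_eq_abs, abs_mul, abs_mul, abs_mul, abs_mul]
  have h3 : |(1 + y * x)⁻¹| ≤ 1 := by rw [abs_of_pos (by positivity)]; exact h2
  have hb : (0:ℝ) ≤ |x ^ α| * |Real.exp (-x)| * |p.eval x| := by positivity
  rw [abs_mul (x ^ α) (Real.exp (-x))]
  exact le_trans (le_of_eq (by ring)) (mul_le_of_le_one_left hb h3)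

noncomputable def Lpoly (α : ℝ) (n : ℕ) : Polynomial ℝ :=
  ∑ j ∈ Finset.range (n + 1),
    Polynomial.C ((-1 : ℝ) ^ j * (Real.Gamma (α + n + 1) /
      (Real.Gamma (α + j + 1) * (Nat.factorial (n - j)))) / (Nat.factorial j)) * X ^ j

lemma Lpoly_eval (α : ℝ) (n : ℕ) (x : ℝ) : (Lpoly α n).eval x = genLaguerre α n x := by
  simp only [Lpoly, genLaguerre, Polynomial.eval_finset_sum, Polynomial.eval_mul,
    Polynomial.eval_C, Polynomial.eval_pow, Polynomial.eval_X]
  congr 1; ext j; ring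

lemma Lpoly_natDegree (α : ℝ) (n : ℕ) : (Lpoly α n).natDegree ≤ n := by
  apply Polynomial.natDegree_sum_le_of_forall_le
  intro j hj
  refine le_trans (Polynomial.natDegree_C_mul_le _ _) ?_
  simpa using Nat.lt_succ_iff.mp (Finset.mem_range.mp hj)

lemma genLaguerre_zero (α : ℝ) (hα : -1 < α) (x : ℝ) : genLaguerre α 0 x = 1 := by
  have h : Real.Gamma (α + 1) ≠ 0 := ne_of_gt (Real.Gamma_pos_of_pos (by linarith))
  simp [genLaguerre]
  field_simp
  exact h

lemma Gamma_prod (x : ℝ) (hx : 0 < x) (j : ℕ) :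
    Real.Gamma (x + j) = Real.Gamma x * ∏ i ∈ Finset.range j, (x + i) := by
  induction j with
  | zero => simp
  | succ j ih =>
    have hxj : x + (j:ℝ) ≠ 0 := by positivity
    rw [Finset.prod_range_succ, show x + ((j:ℕ)+1 : ℕ) = (x + j) + 1 by push_cast; ring,
      Real.Gamma_add_one hxj, ih]
    ring

lemma orth_mono {α : ℝ} (hα : -1 < α) {j m : ℕ} (hjm : j < m) :
    ∫ ρ in Ioi (0:ℝ), ρ ^ α * Real.exp (-ρ) * genLaguerre α m ρ * ρ ^ j = 0 := by
  set c : ℕ → ℝ := fun k => (-1:ℝ)^k * (Real.Gamma (α+m+1) /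
    (Real.Gamma (α+k+1) * (Nat.factorial (m-k)))) / (Nat.factorial k) with hc
  have hint : ∀ k ∈ Finset.range (m+1),
      IntegrableOn (fun ρ : ℝ => c k * (ρ^α * Real.exp (-ρ) * ρ^(k+j))) (Ioi 0) :=
    fun k _ => (int_mono hα (k+j)).const_mul _
  have heq : ∀ ρ : ℝ, ρ ^ α * Real.exp (-ρ) * genLaguerre α m ρ * ρ ^ j
      = ∑ k ∈ Finset.range (m+1), c k * (ρ^α * Real.exp (-ρ) * ρ^(k+j)) := by
    intro ρ
    simp only [genLaguerre, Finset.mul_sum, Finset.sum_mul]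
    congr 1; ext k
    rw [pow_add]; simp only [hc]; ring
  simp only [heq]
  rw [MeasureTheory.integral_finset_sum _ hint]
  have hval : ∀ k ∈ Finset.range (m+1),
      (∫ ρ in Ioi (0:ℝ), c k * (ρ^α * Real.exp (-ρ) * ρ^(k+j)))
        = c k * Real.Gamma (α + (↑(k+j):ℝ) + 1) := by
    intro k _
    rw [MeasureTheory.integral_const_mul, moment hα (k+j)]
  rw [Finset.sum_congr rfl hval]
  set P : ℝ[X] := ∏ i ∈ Finset.range j, (X + C (α+1+i)) with hPdef
  have hPmonic : P.Monic := monic_prod_of_monic _ _ (fun i _ => monic_X_add_C _)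
  have hPnat : P.natDegree = j := by
    rw [hPdef, Polynomial.natDegree_prod _ _ (fun i _ => (monic_X_add_C _).ne_zero)]
    exact (Finset.sum_congr rfl (fun i _ => Polynomial.natDegree_X_add_C _)).trans (by simp)
  have hdegP : P.degree < (m:ℕ) := by
    rw [Polynomial.degree_eq_natDegree hPmonic.ne_zero, hPnat]
    exact_mod_cast hjm
  have hterm : ∀ k ∈ Finset.range (m+1), c k * Real.Gamma (α + (↑(k+j):ℝ) + 1)
      = (Real.Gamma (α+m+1) / (Nat.factorial m)) *
          ((-1:ℝ)^k * (m.choose k) * P.eval (k:ℝ)) := by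
    intro k hk
    have hk' : k ≤ m := Nat.lt_succ_iff.mp (Finset.mem_range.mp hk)
    have hx : (0:ℝ) < α + k + 1 := by
      have h0 : (0:ℝ) ≤ (k:ℝ) := Nat.cast_nonneg k; linarith
    have hG : Real.Gamma (α + (↑(k+j):ℝ) + 1) = Real.Gamma (α+k+1) * P.eval (k:ℝ) := by
      rw [show α + (↑(k+j):ℝ) + 1 = (α+(k:ℝ)+1) + j by push_cast; ring,
        Gamma_prod (α+(k:ℝ)+1) hx j]
      congr 1
      rw [hPdef, Polynomial.eval_prod]
      refine Finset.prod_congr rfl (fun i _ => ?_)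
      simp; ring
    have hfac : (Nat.factorial m : ℝ)
        = (m.choose k) * (Nat.factorial k) * (Nat.factorial (m-k)) := by
      exact_mod_cast (Nat.choose_mul_factorial_mul_factorial hk').symm
    have hGk : Real.Gamma (α+k+1) ≠ 0 := ne_of_gt (Real.Gamma_pos_of_pos hx)
    have hfk : (Nat.factorial k : ℝ) ≠ 0 := Nat.cast_ne_zero.mpr (Nat.factorial_ne_zero k)
    have hfmk : (Nat.factorial (m-k) : ℝ) ≠ 0 := Nat.cast_ne_zero.mpr (Nat.factorial_ne_zero _)
    have hfm : (Nat.factorial m : ℝ) ≠ 0 := Nat.cast_ne_zero.mpr (Nat.factorial_ne_zero m)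
    rw [hG, hc]
    field_simp
    rw [hfac]
    ring
  rw [Finset.sum_congr rfl hterm, ← Finset.mul_sum, altsum m P hdegP, mul_zero]


lemma orth_poly {α : ℝ} (hα : -1 < α) {m : ℕ} (p : Polynomial ℝ) (hp : p.natDegree < m) :
    ∫ ρ in Ioi (0:ℝ), ρ ^ α * Real.exp (-ρ) * genLaguerre α m ρ * p.eval ρ = 0 := by
  have hint : ∀ j ∈ Finset.range (p.natDegree + 1),
      IntegrableOn (fun ρ : ℝ => p.coeff j *
        (ρ ^ α * Real.exp (-ρ) * genLaguerre α m ρ * ρ ^ j)) (Ioi 0) := by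
    intro j _
    have h : (fun ρ : ℝ => ρ ^ α * Real.exp (-ρ) * genLaguerre α m ρ * ρ ^ j)
        = fun ρ : ℝ => ρ ^ α * Real.exp (-ρ) * ((Lpoly α m * X ^ j).eval ρ) := by
      funext ρ
      rw [Polynomial.eval_mul, Polynomial.eval_pow, Polynomial.eval_X, Lpoly_eval]
      ring
    refine Integrable.const_mul ?_ _
    rw [h]
    exact int_poly hα _
  have heq : ∀ ρ : ℝ, ρ ^ α * Real.exp (-ρ) * genLaguerre α m ρ * p.eval ρ
      = ∑ j ∈ Finset.range (p.natDegree + 1),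
          p.coeff j * (ρ ^ α * Real.exp (-ρ) * genLaguerre α m ρ * ρ ^ j) := by
    intro ρ
    rw [Polynomial.eval_eq_sum_range, Finset.mul_sum]
    congr 1; ext j; ring
  simp only [heq]
  rw [MeasureTheory.integral_finset_sum _ hint]
  refine Finset.sum_eq_zero (fun j hj => ?_)
  have hjm : j < m := lt_of_lt_of_le (Finset.mem_range.mp hj) hp
  rw [MeasureTheory.integral_const_mul, orth_mono hα hjm, mul_zero]

lemma int_w_gen {α : ℝ} (hα : -1 < α) {y : ℝ} (hy : 0 < y) (k : ℕ) :
    IntegrableOn (fun ρ : ℝ => (1 + y * ρ)⁻¹ * ρ ^ α * Real.exp (-ρ) *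
      genLaguerre α k ρ) (Ioi 0) := by
  have h : (fun ρ : ℝ => (1 + y * ρ)⁻¹ * ρ ^ α * Real.exp (-ρ) * genLaguerre α k ρ)
      = fun ρ : ℝ => (1 + y * ρ)⁻¹ * ρ ^ α * Real.exp (-ρ) * (Lpoly α k).eval ρ := by
    funext ρ; rw [Lpoly_eval]
  rw [h]
  exact int_w_poly hα hy _

lemma Imn_eq {α y : ℝ} (hα : -1 < α) (k : ℕ) :
    Imn α α y k 0 = ∫ ρ in Ioi (0:ℝ), (1 + y * ρ)⁻¹ * ρ ^ α * Real.exp (-ρ) *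
      genLaguerre α k ρ := by
  unfold Imn
  refine setIntegral_congr_fun measurableSet_Ioi (fun ρ _ => ?_)
  rw [genLaguerre_zero α hα, mul_one]

lemma wint_fpoly {α y : ℝ} (hα : -1 < α) (hy : 0 < y)
    (hI : ∀ k : ℕ, Imn α α y k 0 ≠ 0) {m : ℕ} (hm : m ≠ 0) :
    ∫ ρ in Ioi (0:ℝ), (1 + y * ρ)⁻¹ * ρ ^ α * Real.exp (-ρ) * fpoly α y m ρ = 0 := by
  set c := Imn α α y m 0 / Imn α α y (m - 1) 0 with hc
  have heq : ∀ ρ : ℝ, (1 + y * ρ)⁻¹ * ρ ^ α * Real.exp (-ρ) * fpoly α y m ρ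
      = ((1 + y * ρ)⁻¹ * ρ ^ α * Real.exp (-ρ) * genLaguerre α m ρ)
        - c * ((1 + y * ρ)⁻¹ * ρ ^ α * Real.exp (-ρ) * genLaguerre α (m-1) ρ) := by
    intro ρ
    rw [fpoly, if_neg hm]
    ring
  simp only [heq]
  rw [MeasureTheory.integral_sub (int_w_gen hα hy m)
       ((int_w_gen hα hy (m-1)).const_mul c),
     MeasureTheory.integral_const_mul, ← Imn_eq hα, ← Imn_eq hα, hc,
     div_mul_cancel₀ _ (hI (m-1)), sub_self]

lemma main_lt (α y : ℝ) (hα : -1 < α) (hy : 0 < y)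
    (hI : ∀ k : ℕ, Imn α α y k 0 ≠ 0) (m n : ℕ) (hmn : n < m) :
    (∫ ρ in Ioi (0 : ℝ), (1 + y * ρ)⁻¹ * ρ ^ α * Real.exp (-ρ) *
        fpoly α y m ρ * fpoly α y n ρ) = 0 := by
  classical
  have hm : m ≠ 0 := by omega
  set c := Imn α α y m 0 / Imn α α y (m - 1) 0 with hc
  set Fm : Polynomial ℝ := Lpoly α m - Polynomial.C c * Lpoly α (m-1) with hFm
  have hFmev : ∀ ρ : ℝ, Fm.eval ρ = fpoly α y m ρ := by
    intro ρ
    rw [fpoly, if_neg hm, hFm]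
    simp [Lpoly_eval]
    exact Or.inl hc
  set Fn : Polynomial ℝ := if n = 0 then 1 else
    Lpoly α n - Polynomial.C (Imn α α y n 0 / Imn α α y (n-1) 0) * Lpoly α (n-1) with hFn
  have hFnev : ∀ ρ : ℝ, Fn.eval ρ = fpoly α y n ρ := by
    intro ρ
    by_cases h0 : n = 0
    · simp [hFn, h0, fpoly]
    · rw [fpoly, if_neg h0, hFn, if_neg h0]
      simp [Lpoly_eval]
  have hFnd : Fn.natDegree ≤ n := by
    by_cases h0 : n = 0
    · simp [hFn, h0]
    · rw [hFn, if_neg h0]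
      refine le_trans (Polynomial.natDegree_sub_le _ _) ?_
      refine max_le (Lpoly_natDegree α n) ?_
      refine le_trans (Polynomial.natDegree_C_mul_le _ _) ?_
      exact le_trans (Lpoly_natDegree α (n-1)) (Nat.sub_le n 1)
  -- division of Fn at a = -(1/y)
  set a : ℝ := -(1/y) with ha
  obtain ⟨Q, hQ⟩ := Polynomial.X_sub_C_dvd_sub_C_eval (a := a) (p := Fn)
  set e : ℝ := Fn.eval a with he
  have hQev : ∀ ρ : ℝ, Fn.eval ρ = e + (ρ - a) * Q.eval ρ := by
    intro ρ
    have := congrArg (Polynomial.eval ρ) hQ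
    simp only [Polynomial.eval_sub, Polynomial.eval_mul, Polynomial.eval_C,
      Polynomial.eval_X] at this
    linarith [this]
  have hQdeg : Q = 0 ∨ Q.natDegree + 1 ≤ n := by
    by_cases hQ0 : Q = 0
    · exact Or.inl hQ0
    · right
      have hXa : (Polynomial.X - Polynomial.C a) ≠ 0 := Polynomial.X_sub_C_ne_zero a
      have h1 : ((Polynomial.X - Polynomial.C a) * Q).natDegree = Q.natDegree + 1 := by
        rw [Polynomial.natDegree_mul hXa hQ0, Polynomial.natDegree_X_sub_C]
        ring
      have h2 : (Fn - Polynomial.C e).natDegree ≤ n := by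
        refine le_trans (Polynomial.natDegree_sub_le _ _) ?_
        simpa using hFnd
      rw [hQ, h1] at h2
      omega
  -- key pointwise identity
  have key : EqOn (fun ρ : ℝ => (1 + y * ρ)⁻¹ * ρ ^ α * Real.exp (-ρ) *
        fpoly α y m ρ * fpoly α y n ρ)
      (fun ρ : ℝ => e * ((1 + y * ρ)⁻¹ * ρ ^ α * Real.exp (-ρ) * fpoly α y m ρ)
        + y⁻¹ * (ρ ^ α * Real.exp (-ρ) * genLaguerre α m ρ * Q.eval ρ
            - c * (ρ ^ α * Real.exp (-ρ) * genLaguerre α (m-1) ρ * Q.eval ρ)))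
      (Ioi 0) := by
    intro ρ hρ
    have hρ0 : (0:ℝ) < ρ := hρ
    have h1 : (0:ℝ) < 1 + y * ρ := by positivity
    have hinv : (1 + y * ρ)⁻¹ * (ρ - a) = y⁻¹ := by
      have h2 : ρ - a = (1 + y * ρ) / y := by
        rw [ha]
        field_simp
        ring
      rw [h2, div_eq_mul_inv, ← mul_assoc, inv_mul_cancel₀ h1.ne', one_mul]
    simp only
    rw [← hFnev, hQev ρ, ← hFmev]
    have hFmev' : Fm.eval ρ = genLaguerre α m ρ - c * genLaguerre α (m-1) ρ := by
      rw [hFm]; simp [Lpoly_eval]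
    rw [hFmev']
    have expand : (1 + y * ρ)⁻¹ * ρ ^ α * Real.exp (-ρ) *
          (genLaguerre α m ρ - c * genLaguerre α (m-1) ρ) * (e + (ρ - a) * Q.eval ρ)
        = e * ((1 + y * ρ)⁻¹ * ρ ^ α * Real.exp (-ρ) *
            (genLaguerre α m ρ - c * genLaguerre α (m-1) ρ))
          + ((1 + y * ρ)⁻¹ * (ρ - a)) * (ρ ^ α * Real.exp (-ρ) * genLaguerre α m ρ * Q.eval ρ
            - c * (ρ ^ α * Real.exp (-ρ) * genLaguerre α (m-1) ρ * Q.eval ρ)) := by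
      ring
    rw [expand, hinv]
  rw [setIntegral_congr_fun measurableSet_Ioi key]
  -- integrability pieces
  have hint1 : IntegrableOn (fun ρ : ℝ => e * ((1 + y * ρ)⁻¹ * ρ ^ α * Real.exp (-ρ) *
      fpoly α y m ρ)) (Ioi 0) := by
    refine Integrable.const_mul ?_ _
    have h : (fun ρ : ℝ => (1 + y * ρ)⁻¹ * ρ ^ α * Real.exp (-ρ) * fpoly α y m ρ)
        = fun ρ : ℝ => (1 + y * ρ)⁻¹ * ρ ^ α * Real.exp (-ρ) * Fm.eval ρ := by
      funext ρ; rw [hFmev]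
    rw [h]
    exact int_w_poly hα hy _
  have hintL : ∀ k : ℕ, IntegrableOn
      (fun ρ : ℝ => ρ ^ α * Real.exp (-ρ) * genLaguerre α k ρ * Q.eval ρ) (Ioi 0) := by
    intro k
    have h : (fun ρ : ℝ => ρ ^ α * Real.exp (-ρ) * genLaguerre α k ρ * Q.eval ρ)
        = fun ρ : ℝ => ρ ^ α * Real.exp (-ρ) * ((Lpoly α k * Q).eval ρ) := by
      funext ρ; rw [Polynomial.eval_mul, Lpoly_eval]; ring
    rw [h]
    exact int_poly hα _
  have hint2 : IntegrableOn (fun ρ : ℝ =>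
      y⁻¹ * (ρ ^ α * Real.exp (-ρ) * genLaguerre α m ρ * Q.eval ρ
        - c * (ρ ^ α * Real.exp (-ρ) * genLaguerre α (m-1) ρ * Q.eval ρ))) (Ioi 0) := by
    exact (((hintL m).sub ((hintL (m-1)).const_mul c)).const_mul y⁻¹)
  rw [MeasureTheory.integral_add hint1 hint2, MeasureTheory.integral_const_mul,
    MeasureTheory.integral_const_mul]
  rw [wint_fpoly hα hy hI hm, mul_zero, zero_add]
  rcases hQdeg with hQ0 | hQd
  · simp [hQ0]
  · have hq1 : Q.natDegree < m := by omega
    have hq2 : Q.natDegree < m - 1 := by omega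
    rw [MeasureTheory.integral_sub (hintL m) ((hintL (m-1)).const_mul c),
      MeasureTheory.integral_const_mul, orth_poly hα Q hq1, orth_poly hα Q hq2,
      mul_zero, sub_zero, mul_zero]

theorem fpoly_orthogonal (α y : ℝ) (hα : -1 < α) (hy : 0 < y)
    (hI : ∀ k : ℕ, Imn α α y k 0 ≠ 0) (m n : ℕ) (hmn : m ≠ n) :
    (∫ ρ in Ioi (0 : ℝ), (1 + y * ρ)⁻¹ * ρ ^ α * Real.exp (-ρ) *
        fpoly α y m ρ * fpoly α y n ρ) = 0 := by
  rcases Nat.lt_or_ge n m with h | h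
  · exact main_lt α y hα hy hI m n h
  · have hnm : m < n := lt_of_le_of_ne h hmn
    have hsym : (fun ρ : ℝ => (1 + y * ρ)⁻¹ * ρ ^ α * Real.exp (-ρ) *
          fpoly α y m ρ * fpoly α y n ρ)
        = fun ρ : ℝ => (1 + y * ρ)⁻¹ * ρ ^ α * Real.exp (-ρ) *
          fpoly α y n ρ * fpoly α y m ρ := by
      funext ρ; ring
    rw [hsym]
    exact main_lt α y hα hy hI n m hnm
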